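/- If M = I - E is a real d×d matrix with |e_ij| ≤ ε for all 1 ≤ i,j ≤ d, and d·ε ≤ 1, then det(M) ≥ 1 - d·ε. -/

import Mathlib

open Matrix

theorem aux1 : ∀ (n : ℕ) (ε : ℝ), 0 ≤ ε →
    ∀ E : Matrix (Fin n) (Fin n) ℝ, (∀ i j, |E i j| ≤ ε) → (n : ℝ) * ε ≤ 1 →
    ((1 : Matrix (Fin n) (Fin n) ℝ) - E).det ≥ 1 - (n : ℝ) * ε := by
  intro n
  induction n with
  | zero =>
      intro ε hε E hE hdε
      simp [Matrix.det_isEmpty]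
  | succ n IH =>
      intro ε hε E hE hdε
      rcases Nat.eq_zero_or_pos n with rfl | hn
      · -- 1×1 case
        rw [show ((1 : Matrix (Fin 1) (Fin 1) ℝ) - E).det = ((1 : Matrix (Fin 1) (Fin 1) ℝ) - E) 0 0 from Matrix.det_fin_one _]
        have := hE 0 0
        have := abs_le.mp this
        simp only [Matrix.sub_apply, Matrix.one_apply_eq]
        push_cast
        linarith [this.2]
      · -- n ≥ 1, so ε ≤ 1/2
        have hε2 : ε ≤ 1 / 2 := by
          have h2 : (2 : ℝ) ≤ (n : ℝ) + 1 := by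
            have : (1 : ℝ) ≤ (n : ℝ) := by exact_mod_cast hn
            linarith
          push_cast at hdε
          nlinarith
        have h1ε : (0 : ℝ) < 1 - ε := by linarith
        set M : Matrix (Fin (n+1)) (Fin (n+1)) ℝ := 1 - E with hM
        set e : Fin 1 ⊕ Fin n ≃ Fin (n+1) := finSumFinEquiv.trans (finCongr (Nat.add_comm 1 n)) with he
        set N : Matrix (Fin 1 ⊕ Fin n) (Fin 1 ⊕ Fin n) ℝ := M.submatrix e e with hN
        have hdetMN : M.det = N.det := (Matrix.det_submatrix_equiv_self e M).symm
        set a : ℝ := M (e (Sum.inl 0)) (e (Sum.inl 0)) with ha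
        have haE : a = 1 - E (e (Sum.inl 0)) (e (Sum.inl 0)) := by
          simp [ha, hM, Matrix.sub_apply, Matrix.one_apply_eq]
        have haa : 1 - ε ≤ a := by
          have := (abs_le.mp (hE (e (Sum.inl 0)) (e (Sum.inl 0)))).2
          rw [haE]; linarith
        have ha0 : a ≠ 0 := by linarith
        have hA11 : ∀ i j, N.toBlocks₁₁ i j = a := by
          intro i j
          have hi : i = 0 := Subsingleton.elim i 0
          have hj : j = 0 := Subsingleton.elim j 0
          subst hi; subst hj
          rfl
        have hdetA : (N.toBlocks₁₁).det = a := by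
          rw [Matrix.det_fin_one, hA11]
        haveI : Invertible (N.toBlocks₁₁) := by
          apply Matrix.invertibleOfIsUnitDet
          rw [hdetA]
          exact isUnit_iff_ne_zero.mpr ha0
        have hinv : (⅟(N.toBlocks₁₁)) 0 0 = a⁻¹ := by
          have h := invOf_mul_self (N.toBlocks₁₁)
          have h00 := congrFun (congrFun h 0) 0
          rw [Matrix.mul_apply, Fin.sum_univ_one, hA11, Matrix.one_apply_eq] at h00
          exact eq_inv_of_mul_eq_one_left h00
        have hblock : N.det = a * (N.toBlocks₂₂ - N.toBlocks₂₁ * ⅟(N.toBlocks₁₁) * N.toBlocks₁₂).det := by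
          conv_lhs => rw [← Matrix.fromBlocks_toBlocks N]
          rw [Matrix.det_fromBlocks₁₁, hdetA]
        set S := N.toBlocks₂₂ - N.toBlocks₂₁ * ⅟(N.toBlocks₁₁) * N.toBlocks₁₂ with hS
        set E' : Matrix (Fin n) (Fin n) ℝ := 1 - S with hE'
        have hSE' : S = 1 - E' := by rw [hE', sub_sub_cancel]
        set ε' : ℝ := ε / (1 - ε) with hε'
        have hε'0 : 0 ≤ ε' := div_nonneg hε (le_of_lt h1ε)
        have hEbd : ∀ i j, |E' i j| ≤ ε' := by
          intro i j
          have hval : E' i j = E (e (Sum.inr i)) (e (Sum.inr j))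
              + N.toBlocks₂₁ i 0 * a⁻¹ * N.toBlocks₁₂ 0 j := by
            have hone : (1 : Matrix (Fin n) (Fin n) ℝ) i j
                = (1 : Matrix (Fin (n+1)) (Fin (n+1)) ℝ) (e (Sum.inr i)) (e (Sum.inr j)) := by
              by_cases h : i = j
              · subst h; simp
              · rw [Matrix.one_apply_ne h, Matrix.one_apply_ne]
                exact fun hc => h (Sum.inr_injective (e.injective hc))
            have hmul : (N.toBlocks₂₁ * ⅟(N.toBlocks₁₁) * N.toBlocks₁₂) i j
                = N.toBlocks₂₁ i 0 * a⁻¹ * N.toBlocks₁₂ 0 j := by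
              rw [Matrix.mul_apply, Fin.sum_univ_one, Matrix.mul_apply, Fin.sum_univ_one, hinv]
            have h22 : N.toBlocks₂₂ i j = M (e (Sum.inr i)) (e (Sum.inr j)) := rfl
            rw [hE', Matrix.sub_apply, hS, Matrix.sub_apply, hmul, h22, hM, Matrix.sub_apply, hone]
            ring
          have h21 : N.toBlocks₂₁ i 0 = - E (e (Sum.inr i)) (e (Sum.inl 0)) := by
            have h : N.toBlocks₂₁ i 0 = M (e (Sum.inr i)) (e (Sum.inl 0)) := rfl
            rw [h, hM, Matrix.sub_apply, Matrix.one_apply_ne]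
            · ring
            · exact e.injective.ne Sum.inr_ne_inl
          have h12 : N.toBlocks₁₂ 0 j = - E (e (Sum.inl 0)) (e (Sum.inr j)) := by
            have h : N.toBlocks₁₂ 0 j = M (e (Sum.inl 0)) (e (Sum.inr j)) := rfl
            rw [h, hM, Matrix.sub_apply, Matrix.one_apply_ne]
            · ring
            · intro hc
              exact Sum.inl_ne_inr (e.injective hc)
          have hainv : |a⁻¹| ≤ (1 - ε)⁻¹ := by
            rw [abs_inv, abs_of_pos (by linarith : (0:ℝ) < a)]
            exact inv_anti₀ h1ε haa
          calc |E' i j| ≤ |E (e (Sum.inr i)) (e (Sum.inr j))|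
                + |N.toBlocks₂₁ i 0| * |a⁻¹| * |N.toBlocks₁₂ 0 j| := by
                rw [hval]
                refine (abs_add_le _ _).trans ?_
                rw [abs_mul, abs_mul]
            _ ≤ ε + ε * (1 - ε)⁻¹ * ε := by
                have b1 := hE (e (Sum.inr i)) (e (Sum.inr j))
                have b2 : |N.toBlocks₂₁ i 0| ≤ ε := by rw [h21, abs_neg]; exact hE _ _
                have b3 : |N.toBlocks₁₂ 0 j| ≤ ε := by rw [h12, abs_neg]; exact hE _ _
                have hia : (0:ℝ) ≤ (1 - ε)⁻¹ := by positivity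
                gcongr <;> first | exact abs_nonneg _ | assumption
            _ = ε' := by rw [hε']; field_simp [ne_of_gt h1ε]; ring
        have hcond : (n : ℝ) * ε' ≤ 1 := by
          rw [hε', show (n:ℝ) * (ε/(1-ε)) = (n*ε)/(1-ε) from by ring, div_le_one h1ε]
          push_cast at hdε ⊢
          nlinarith
        have hIH := IH ε' hε'0 E' hEbd hcond
        rw [← hSE'] at hIH
        have hfin : (1 - ε) * (1 - (n : ℝ) * ε') = 1 - ((n : ℝ) + 1) * ε := by
          rw [hε']
          field_simp [ne_of_gt h1ε]
          ring
        rw [hdetMN, hblock]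
        have hSnn : 0 ≤ S.det := by linarith [hIH, hcond]
        push_cast
        calc a * S.det ≥ (1 - ε) * S.det := by nlinarith
          _ ≥ (1 - ε) * (1 - (n : ℝ) * ε') := by nlinarith
          _ = 1 - ((n : ℝ) + 1) * ε := hfin

theorem stmt_1 (d : ℕ) (hd : 0 < d) (ε : ℝ) (hε : 0 ≤ ε)
    (E : Matrix (Fin d) (Fin d) ℝ) (hE : ∀ i j, |E i j| ≤ ε)
    (hdε : (d : ℝ) * ε ≤ 1) :
    ((1 : Matrix (Fin d) (Fin d) ℝ) - E).det ≥ 1 - (d : ℝ) * ε := by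
  exact aux1 d ε hε E hE hdε
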